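/- Let B₁° denote the open unit ball of ℝⁿ and let Γ ⊆ B₁° be a compact d-set with 0 < d < n. Let (x_k)_{k∈ℕ} ⊆ Γ and (R_k)_{k∈ℕ} ⊆ (0,∞) be such that B(x_k,R_k) ⊆ B₁° for all k, B(x_k,R_k) ∩ B(x_{k'},R_{k'}) = ∅ for k ≠ k', and Γ ∩ ⋃_{k} B(x_k,R_k) is dense in Γ. Let (r_k)_{k∈ℕ} satisfy 0 < r_k < R_k for all k, and set Ω := B₁° ∖ cl(⋃_{k} B(x_k,r_k)). Then Ω = int(cl Ω). If moreover r_k ≤ R_k/3 for all k, then Ω is an open n-set: there exists c > 0 such that c·rⁿ ≤ |Ω ∩ B(x,r)| for all x ∈ Ω and 0 < r ≤ 1. -/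

import Mathlib

open Metric MeasureTheory Set
open scoped ENNReal NNReal


lemma stmt14_vol_zero {n : ℕ} {d : ℝ} (hd0 : 0 < d) (hdn : d < n)
    {Γ : Set (EuclideanSpace ℝ (Fin n))} (hΓcomp : IsCompact Γ)
    (c₂ : ℝ)
    (hbound : ∀ x ∈ Γ, μH[d] (Γ ∩ Metric.closedBall x 1) ≤ ENNReal.ofReal c₂) :
    volume Γ = 0 := by
  have hfin : μH[d] Γ ≠ ∞ := by
    obtain ⟨t, ht⟩ := hΓcomp.elim_finite_subcover
      (fun z : Γ => ball (z : EuclideanSpace ℝ (Fin n)) 1)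
      (fun _ => isOpen_ball) (fun z hz => mem_iUnion.2 ⟨⟨z, hz⟩, mem_ball_self one_pos⟩)
    have hsub : Γ ⊆ ⋃ z ∈ t, Γ ∩ closedBall (z : EuclideanSpace ℝ (Fin n)) 1 := by
      intro w hw
      obtain ⟨z, hz, hwz⟩ := mem_iUnion₂.1 (ht hw)
      exact mem_iUnion₂.2 ⟨z, hz, hw, ball_subset_closedBall hwz⟩
    have h1 : μH[d] Γ ≤ ∑ z ∈ t, ENNReal.ofReal c₂ := by
      refine ((measure_mono hsub).trans (measure_biUnion_finset_le _ _)).trans ?_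
      exact Finset.sum_le_sum fun z _ => hbound z z.2
    refine (h1.trans_lt ?_).ne
    simp only [Finset.sum_const, nsmul_eq_mul]
    exact ENNReal.mul_lt_top (by simp) ENNReal.ofReal_lt_top
  -- dimH Γ ≤ d < n
  have hdim : dimH Γ < (n : ℝ≥0) := by
    have h1 : dimH Γ ≤ (d.toNNReal : ℝ≥0∞) := by
      apply dimH_le_of_hausdorffMeasure_ne_top
      rwa [Real.coe_toNNReal d hd0.le]
    refine h1.trans_lt ?_
    rw [ENNReal.coe_lt_coe, ← NNReal.coe_lt_coe]
    simpa [Real.coe_toNNReal d hd0.le] using hdn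
  have hHn : μH[(n : ℝ)] Γ = 0 := by
    have := hausdorffMeasure_of_dimH_lt hdim
    simpa using this
  -- transfer to pi space
  have hlip : LipschitzWith 1 (WithLp.equiv 2 (Fin n → ℝ)) := PiLp.lipschitzWith_ofLp 2 _
  have himg : μH[(n : ℝ)] ((WithLp.equiv 2 (Fin n → ℝ)) '' Γ) = 0 := by
    have := hlip.hausdorffMeasure_image_le (by positivity : (0:ℝ) ≤ (n:ℝ)) Γ
    simpa [hHn] using this
  have hvolpi : volume ((WithLp.equiv 2 (Fin n → ℝ)) '' Γ) = 0 := by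
    rw [← hausdorffMeasure_pi_real (ι := Fin n)] at *
    simpa [Fintype.card_fin] using himg
  have hmeas : MeasurableSet ((WithLp.equiv 2 (Fin n → ℝ)) '' Γ) := by
    have hcont : Continuous (WithLp.equiv 2 (Fin n → ℝ)) := hlip.continuous
    exact (hΓcomp.image hcont).measurableSet
  have hmp : MeasurePreserving (WithLp.equiv 2 (Fin n → ℝ)) := PiLp.volume_preserving_ofLp (Fin n)
  have := hmp.measure_preimage hmeas.nullMeasurableSet
  rw [Equiv.preimage_image] at this
  rw [this]; exact hvolpi

lemma stmt14_vol_cb {n : ℕ} (z : EuclideanSpace ℝ (Fin n)) {t : ℝ} (ht : 0 ≤ t) :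
    volume (closedBall z t)
      = ENNReal.ofReal (t ^ n) * volume (ball (0 : EuclideanSpace ℝ (Fin n)) 1) := by
  rw [Measure.addHaar_closedBall _ z ht, finrank_euclideanSpace_fin]

lemma stmt14_rfin {n : ℕ}
    (x : ℕ → EuclideanSpace ℝ (Fin n))
    (R : ℕ → ℝ) (hR : ∀ k, 0 < R k)
    (hsub : ∀ k, Metric.closedBall (x k) (R k) ⊆
      Metric.ball (0 : EuclideanSpace ℝ (Fin n)) 1)
    (hdisj : ∀ k k' : ℕ, k ≠ k' →
      Metric.closedBall (x k) (R k) ∩ Metric.closedBall (x k') (R k') = ∅)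
    (r : ℕ → ℝ) (hrR : ∀ k, r k ≤ R k)
    {δ : ℝ} (hδ : 0 < δ) : {k | δ ≤ r k}.Finite := by
  have hdisj' : Pairwise (Function.onFun Disjoint fun k => closedBall (x k) (R k)) := by
    intro k k' hkk'
    exact Set.disjoint_iff_inter_eq_empty.2 (hdisj k k' hkk')
  have hsum : ∑' k, volume (closedBall (x k) (R k)) ≠ ∞ := by
    rw [← measure_iUnion hdisj' fun k => measurableSet_closedBall]
    exact ((measure_mono (iUnion_subset fun k => hsub k)).trans_lt measure_ball_lt_top).ne
  set ω := volume (ball (0 : EuclideanSpace ℝ (Fin n)) 1) with hω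
  have hε : (ENNReal.ofReal (δ ^ n) * ω) ≠ 0 := by
    refine mul_ne_zero ?_ (measure_ball_pos _ _ one_pos).ne'
    simp [ENNReal.ofReal_eq_zero, not_le, pow_pos hδ]
  refine (ENNReal.finite_const_le_of_tsum_ne_top hsum hε).subset ?_
  intro k hk
  have h1 : δ ≤ R k := le_trans hk ((hrR k).trans le_rfl)
  have : ENNReal.ofReal (δ ^ n) ≤ ENNReal.ofReal (R k ^ n) :=
    ENNReal.ofReal_le_ofReal (pow_le_pow_left₀ hδ.le h1 n)
  calc ENNReal.ofReal (δ ^ n) * ω ≤ ENNReal.ofReal (R k ^ n) * ω := by gcongr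
    _ = volume (closedBall (x k) (R k)) := (stmt14_vol_cb _ (hR k).le).symm

lemma stmt14_Fsub {n : ℕ}
    {Γ : Set (EuclideanSpace ℝ (Fin n))} (hΓcl : IsClosed Γ)
    (x : ℕ → EuclideanSpace ℝ (Fin n)) (hx : ∀ k, x k ∈ Γ)
    (r : ℕ → ℝ)
    (hfin : ∀ δ : ℝ, 0 < δ → {k | δ ≤ r k}.Finite) :
    closure (⋃ k, Metric.closedBall (x k) (r k)) ⊆
      (⋃ k, Metric.closedBall (x k) (r k)) ∪ Γ := by
  intro z hz
  by_cases hz2 : z ∈ ⋃ k, Metric.closedBall (x k) (r k)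
  · exact Or.inl hz2
  right
  rw [← hΓcl.closure_eq, Metric.mem_closure_iff]
  intro ε hε
  have hK : {k | ε / 2 ≤ r k}.Finite := hfin _ (by linarith)
  have hC : IsClosed (⋃ k ∈ {k | ε / 2 ≤ r k}, Metric.closedBall (x k) (r k)) :=
    hK.isClosed_biUnion fun k _ => Metric.isClosed_closedBall
  have hzC : z ∉ ⋃ k ∈ {k | ε / 2 ≤ r k}, Metric.closedBall (x k) (r k) := by
    intro h
    obtain ⟨k, _, hk2⟩ := mem_iUnion₂.1 h
    exact hz2 (mem_iUnion.2 ⟨k, hk2⟩)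
  obtain ⟨δ, hδ0, hδ⟩ := Metric.isOpen_iff.1 hC.isOpen_compl z hzC
  obtain ⟨w, hw, hwz⟩ := Metric.mem_closure_iff.1 hz (min δ (ε / 2))
    (lt_min hδ0 (by linarith))
  obtain ⟨k, hwk⟩ := mem_iUnion.1 hw
  have hkK : ¬ (ε / 2 ≤ r k) := by
    intro h
    exact hδ (mem_ball'.2 (hwz.trans_le (min_le_left _ _)))
      (mem_iUnion₂.2 ⟨k, h, hwk⟩)
  refine ⟨x k, hx k, ?_⟩
  calc dist z (x k) ≤ dist z w + dist w (x k) := dist_triangle _ _ _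
    _ < min δ (ε / 2) + r k := by
        exact add_lt_add_of_lt_of_le hwz (mem_closedBall.1 hwk)
    _ ≤ ε / 2 + ε / 2 := by
        have := min_le_right δ (ε / 2); linarith [not_le.1 hkK]
    _ = ε := by ring

lemma stmt14_caseA {E : Type*} [NormedAddCommGroup E] [NormedSpace ℝ E]
    (x0 y : E) {Rk rk t : ℝ} (hrk : 0 < rk) (hr3 : rk ≤ Rk / 3)
    (ht : 0 < t) (hD : rk < dist y x0) (hDle : dist y x0 ≤ t + Rk) :
    ∃ q : E, closedBall q (min Rk t / 6) ⊆ ball x0 Rk \ closedBall x0 rk ∧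
      closedBall q (min Rk t / 6) ⊆ closedBall y (3 * t / 2) := by
  set v : ℝ := min Rk t / 6 with hvdef
  set D : ℝ := dist y x0 with hDdef
  have hRk : 0 < Rk := by nlinarith
  have hv : 0 < v := by
    have := lt_min hRk ht
    simp only [hvdef]; linarith [lt_min hRk ht]
  have hv6 : v ≤ Rk / 6 := by
    simp only [hvdef]; have := min_le_left Rk t; linarith
  have hvt : v ≤ t / 6 := by
    simp only [hvdef]; have := min_le_right Rk t; linarith
  have hD0 : 0 < D := hrk.trans hD
  set m : ℝ := max (rk + 2 * v) (min D (Rk - 2 * v)) with hmdef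
  have hm_lo : rk + 2 * v ≤ m := le_max_left _ _
  have hm_up : m ≤ Rk - 2 * v := by
    apply max_le _ (min_le_right _ _)
    linarith
  have hm0 : 0 < m := by linarith
  refine ⟨x0 + (m / D) • (y - x0), ?_, ?_⟩
  · have hqx : dist (x0 + (m / D) • (y - x0)) x0 = m := by
      rw [dist_eq_norm, add_sub_cancel_left, norm_smul, Real.norm_eq_abs,
        abs_of_nonneg (by positivity : (0:ℝ) ≤ m / D), ← dist_eq_norm, ← hDdef]
      field_simp
    intro z hz
    have hz' : dist z (x0 + (m / D) • (y - x0)) ≤ v := mem_closedBall.1 hz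
    have h5 : dist z x0 ≤ dist z (x0 + (m / D) • (y - x0)) + m := by
      have := dist_triangle z (x0 + (m / D) • (y - x0)) x0
      rwa [hqx] at this
    have h6 : m ≤ dist z (x0 + (m / D) • (y - x0)) + dist z x0 := by
      have := dist_triangle (x0 + (m / D) • (y - x0)) z x0
      rw [hqx, dist_comm _ z] at this
      linarith
    constructor
    · rw [mem_ball]; linarith
    · rw [mem_closedBall, not_le]; linarith
  · have hqy : dist (x0 + (m / D) • (y - x0)) y = |m - D| := by
      have h1 : x0 + (m / D) • (y - x0) - y = (m / D - 1) • (y - x0) := by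
        rw [sub_smul, one_smul]; abel
      rw [dist_eq_norm, h1, norm_smul, Real.norm_eq_abs, ← dist_eq_norm, ← hDdef]
      rw [show m / D - 1 = (m - D) / D by field_simp, abs_div, abs_of_nonneg hD0.le]
      field_simp
    have hmd : |m - D| ≤ t + 2 * v := by
      rw [abs_le]
      constructor
      · -- -(t+2v) ≤ m - D  i.e.  D - m ≤ t + 2v
        rcases le_total D (Rk - 2 * v) with h | h
        · have : min D (Rk - 2 * v) = D := min_eq_left h
          have : D ≤ m := this ▸ le_max_right _ _
          linarith
        · have : min D (Rk - 2 * v) = Rk - 2 * v := min_eq_right h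
          have : Rk - 2 * v ≤ m := this ▸ le_max_right _ _
          linarith
      · -- m - D ≤ t + 2v
        have h1 : m ≤ max (rk + 2 * v) D := max_le_max le_rfl (min_le_left _ _)
        rcases max_cases (rk + 2 * v) D with ⟨he, _⟩ | ⟨he, _⟩ <;> rw [he] at h1 <;> linarith
    intro z hz
    have hz' : dist z (x0 + (m / D) • (y - x0)) ≤ v := mem_closedBall.1 hz
    have h5 : dist z y ≤ dist z (x0 + (m / D) • (y - x0)) + |m - D| := by
      have := dist_triangle z (x0 + (m / D) • (y - x0)) y
      rwa [hqy] at this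
    rw [mem_closedBall]; linarith

theorem statement14
    (n : ℕ) (hn : 1 ≤ n)
    (d : ℝ) (hd0 : 0 < d) (hdn : d < n)
    (Γ : Set (EuclideanSpace ℝ (Fin n)))
    (hΓcomp : IsCompact Γ)
    (hΓsub : Γ ⊆ Metric.ball (0 : EuclideanSpace ℝ (Fin n)) 1)
    (hdset : ∃ c₁ c₂ : ℝ, 0 < c₁ ∧ c₁ ≤ c₂ ∧
      ∀ x ∈ Γ, ∀ r : ℝ, 0 < r → r ≤ 1 →
        ENNReal.ofReal (c₁ * r ^ d) ≤ μH[d] (Γ ∩ Metric.closedBall x r) ∧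
        μH[d] (Γ ∩ Metric.closedBall x r) ≤ ENNReal.ofReal (c₂ * r ^ d))
    (x : ℕ → EuclideanSpace ℝ (Fin n)) (hx : ∀ k, x k ∈ Γ)
    (R : ℕ → ℝ) (hR : ∀ k, 0 < R k)
    (hsub : ∀ k, Metric.closedBall (x k) (R k) ⊆
      Metric.ball (0 : EuclideanSpace ℝ (Fin n)) 1)
    (hdisj : ∀ k k' : ℕ, k ≠ k' →
      Metric.closedBall (x k) (R k) ∩ Metric.closedBall (x k') (R k') = ∅)
    (hdense : Γ ⊆ closure (Γ ∩ ⋃ k, Metric.closedBall (x k) (R k)))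
    (r : ℕ → ℝ) (hr : ∀ k, 0 < r k) (hrR : ∀ k, r k < R k)
    (Ω : Set (EuclideanSpace ℝ (Fin n)))
    (hΩ : Ω = Metric.ball (0 : EuclideanSpace ℝ (Fin n)) 1 \
      closure (⋃ k, Metric.closedBall (x k) (r k))) :
    Ω = interior (closure Ω) ∧
    ((∀ k, r k ≤ R k / 3) →
      Ω.Nonempty ∧ IsOpen Ω ∧
      ∃ c : ℝ, 0 < c ∧ ∀ y ∈ Ω, ∀ ρ : ℝ, 0 < ρ → ρ ≤ 1 →
        ENNReal.ofReal (c * ρ ^ n) ≤ volume (Ω ∩ Metric.closedBall y ρ)) := by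
  set F := closure (⋃ k, Metric.closedBall (x k) (r k)) with hF
  have hΩopen : IsOpen Ω := by rw [hΩ]; exact isOpen_ball.sdiff isClosed_closure
  have hsmallF : ∀ k, Metric.closedBall (x k) (r k) ⊆ F := fun k =>
    (subset_iUnion (fun j => Metric.closedBall (x j) (r j)) k).trans subset_closure
  have hΩmem : ∀ y ∈ Ω, y ∈ ball (0 : EuclideanSpace ℝ (Fin n)) 1 ∧ y ∉ F := by
    intro y hy; rw [hΩ] at hy; exact hy
  have hΩdist : ∀ y ∈ Ω, ∀ k, r k < dist y (x k) := by
    intro y hy k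
    by_contra h
    push_neg at h
    exact (hΩmem y hy).2 (hsmallF k (mem_closedBall.2 h))
  constructor
  · -- Ω = interior (closure Ω)
    refine Subset.antisymm (hΩopen.subset_interior_iff.mpr subset_closure) ?_
    intro z hz
    have hclosed : closure Ω ⊆ Metric.closedBall (0 : EuclideanSpace ℝ (Fin n)) 1 :=
      closure_minimal (by rw [hΩ]; exact diff_subset.trans ball_subset_closedBall)
        Metric.isClosed_closedBall
    have hz1 : z ∈ ball (0 : EuclideanSpace ℝ (Fin n)) 1 := by
      have := interior_mono hclosed hz
      rwa [interior_closedBall _ one_ne_zero] at this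
    have hz2 : z ∉ F := by
      intro hzF
      obtain ⟨ε, hε0, hball⟩ := Metric.isOpen_iff.1 isOpen_interior z hz
      obtain ⟨w, hw, hwz⟩ := Metric.mem_closure_iff.1 hzF (ε / 2) (by linarith)
      obtain ⟨k, hwk⟩ := mem_iUnion.1 hw
      have hwcl : w ∈ closure (ball (x k) (r k)) := by
        rwa [closure_ball _ (hr k).ne']
      obtain ⟨w', hw', hww'⟩ := Metric.mem_closure_iff.1 hwcl (ε / 2) (by linarith)
      have hw'z : w' ∈ ball z ε := by
        rw [mem_ball']
        calc dist z w' ≤ dist z w + dist w w' := dist_triangle _ _ _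
          _ < ε / 2 + ε / 2 := add_lt_add hwz hww'
          _ = ε := by ring
      have hw'cl : w' ∈ closure Ω := interior_subset (hball hw'z)
      have hdis : closure Ω ⊆ (ball (x k) (r k))ᶜ := by
        refine closure_minimal ?_ isOpen_ball.isClosed_compl
        intro u hu hub
        exact (hΩmem u hu).2 (hsmallF k (ball_subset_closedBall hub))
      exact hdis hw'cl hw'
    rw [hΩ]; exact ⟨hz1, hz2⟩
  intro h3
  -- annulus lemma
  have hannulus : ∀ k, ball (x k) (R k) \ Metric.closedBall (x k) (r k) ⊆ Ω := by
    intro k z hz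
    rw [hΩ]
    refine ⟨hsub k (ball_subset_closedBall hz.1), ?_⟩
    have hopen : IsOpen (ball (x k) (R k) \ Metric.closedBall (x k) (r k)) :=
      isOpen_ball.sdiff Metric.isClosed_closedBall
    have hdisjU : (⋃ j, Metric.closedBall (x j) (r j)) ⊆
        (ball (x k) (R k) \ Metric.closedBall (x k) (r k))ᶜ := by
      intro u hu
      obtain ⟨j, huj⟩ := mem_iUnion.1 hu
      intro hu2
      rcases eq_or_ne j k with rfl | hjk
      · exact hu2.2 huj
      · have h1 : u ∈ Metric.closedBall (x j) (R j) :=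
          closedBall_subset_closedBall (hrR j).le huj
        have h2 : u ∈ Metric.closedBall (x k) (R k) := ball_subset_closedBall hu2.1
        have := hdisj j k hjk
        exact absurd (mem_inter h1 h2) (by rw [this]; exact Set.notMem_empty u)
    have := closure_minimal hdisjU hopen.isClosed_compl
    exact fun hzF => (this hzF) hz
  -- nonempty
  have hΩne : Ω.Nonempty := by
    set e : EuclideanSpace ℝ (Fin n) := EuclideanSpace.single (⟨0, hn⟩ : Fin n) (1 : ℝ) with he
    have hne : ‖e‖ = 1 := by rw [he, EuclideanSpace.norm_single, norm_one]
    refine ⟨x 0 + (3 * R 0 / 4) • e, hannulus 0 ⟨?_, ?_⟩⟩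
    · rw [mem_ball, dist_eq_norm, add_sub_cancel_left, norm_smul, Real.norm_eq_abs,
        hne, mul_one, abs_of_nonneg (by linarith [hR 0])]
      linarith [hR 0]
    · rw [mem_closedBall, dist_eq_norm, add_sub_cancel_left, norm_smul, Real.norm_eq_abs,
        hne, mul_one, abs_of_nonneg (by linarith [hR 0]), not_le]
      linarith [hR 0, h3 0, hr 0]
  refine ⟨hΩne, hΩopen, ?_⟩
  -- measure bound
  set ω := volume (ball (0 : EuclideanSpace ℝ (Fin n)) 1) with hωdef
  have hωpos : 0 < ω := measure_ball_pos _ _ one_pos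
  have hωfin : ω ≠ ∞ := measure_ball_lt_top.ne
  have hvolΓ : volume Γ = 0 := by
    obtain ⟨c₁, c₂, hc₁, hc₁₂, hds⟩ := hdset
    refine stmt14_vol_zero hd0 hdn hΓcomp c₂ fun z hz => ?_
    have := (hds z hz 1 one_pos le_rfl).2
    simpa using this
  have hfinr : ∀ δ : ℝ, 0 < δ → {k | δ ≤ r k}.Finite := fun δ hδ =>
    stmt14_rfin x R hR hsub hdisj r (fun k => (hrR k).le) hδ
  have hFsub' := stmt14_Fsub hΓcomp.isClosed x hx r hfinr
  set m : ℝ := min ((1 / 192 : ℝ) ^ n) ((2 / 9) * (1 / 32 : ℝ) ^ n) with hmdef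
  have hm0 : 0 < m := lt_min (by positivity) (by positivity)
  refine ⟨ω.toReal * m, mul_pos (ENNReal.toReal_pos hωpos.ne' hωfin) hm0, ?_⟩
  intro y hy ρ hρ0 hρ1
  have hcρ : ENNReal.ofReal (ω.toReal * m * ρ ^ n) = ENNReal.ofReal (m * ρ ^ n) * ω := by
    rw [show ω.toReal * m * ρ ^ n = m * ρ ^ n * ω.toReal by ring,
      ENNReal.ofReal_mul (by positivity), ENNReal.ofReal_toReal hωfin]
  rw [hcρ]
  set s : ℝ := ρ / 32 with hsdef
  set t : ℝ := 5 * ρ / 32 with htdef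
  set y₁ : EuclideanSpace ℝ (Fin n) := (1 - ρ / 8) • y with hy₁def
  have hyn : ‖y‖ ≤ 1 := by
    have := mem_ball_zero_iff.1 (hΩmem y hy).1
    linarith
  have hy₁y : dist y₁ y ≤ ρ / 8 := by
    have h1 : y₁ - y = (-(ρ / 8)) • y := by
      rw [hy₁def]; module
    rw [dist_eq_norm, h1, norm_smul, Real.norm_eq_abs, abs_neg,
      abs_of_nonneg (by linarith)]
    nlinarith [norm_nonneg y]
  have hy₁n : ‖y₁‖ ≤ 1 - ρ / 8 := by
    rw [hy₁def, norm_smul, Real.norm_eq_abs, abs_of_nonneg (by linarith)]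
    nlinarith [norm_nonneg y]
  have hs0 : 0 < s := by rw [hsdef]; linarith
  have ht0 : 0 < t := by rw [htdef]; linarith
  have hcbball : Metric.closedBall y₁ s ⊆ ball (0 : EuclideanSpace ℝ (Fin n)) 1 := by
    intro z hz
    rw [mem_ball]
    calc dist z 0 ≤ dist z y₁ + dist y₁ 0 := dist_triangle _ _ _
      _ = dist z y₁ + ‖y₁‖ := by rw [dist_zero_right]
      _ ≤ s + (1 - ρ / 8) := add_le_add (mem_closedBall.1 hz) hy₁n
      _ < 1 := by rw [hsdef]; linarith
  have hcbcb : Metric.closedBall y₁ s ⊆ Metric.closedBall y ρ := by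
    intro z hz
    rw [mem_closedBall]
    calc dist z y ≤ dist z y₁ + dist y₁ y := dist_triangle _ _ _
      _ ≤ s + ρ / 8 := add_le_add (mem_closedBall.1 hz) hy₁y
      _ ≤ ρ := by rw [hsdef]; linarith
  by_cases hcase : ∃ k, s ≤ R k ∧
      (Metric.closedBall (x k) (R k) ∩ Metric.closedBall y₁ s).Nonempty
  · -- Case A : a large ball comes close; use the annulus
    obtain ⟨k, hks, w, hw1, hw2⟩ := hcase
    have hDle : dist y (x k) ≤ t + R k := by
      calc dist y (x k) ≤ dist y y₁ + dist y₁ w + dist w (x k) := dist_triangle4 _ _ _ _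
        _ ≤ ρ / 8 + s + R k := by
            refine add_le_add (add_le_add ?_ ?_) (mem_closedBall.1 hw1)
            · rw [dist_comm]; exact hy₁y
            · rw [dist_comm]; exact mem_closedBall.1 hw2
        _ = t + R k := by rw [htdef, hsdef]; ring
    obtain ⟨q, hq1, hq2⟩ := stmt14_caseA (x k) y (hr k) (h3 k) ht0 (hΩdist y hy k) hDle
    have hv0 : (0:ℝ) ≤ min (R k) t / 6 :=
      div_nonneg (le_min (hR k).le ht0.le) (by norm_num)
    have hv6 : ρ / 192 ≤ min (R k) t / 6 := by
      have h1 : s ≤ min (R k) t := le_min hks (by rw [htdef, hsdef]; linarith)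
      rw [hsdef] at h1
      linarith
    calc ENNReal.ofReal (m * ρ ^ n) * ω
        ≤ ENNReal.ofReal ((min (R k) t / 6) ^ n) * ω := by
          refine mul_le_mul_left (ENNReal.ofReal_le_ofReal ?_) ω
          calc m * ρ ^ n ≤ (1 / 192) ^ n * ρ ^ n := by
                have h1 := min_le_left ((1 / 192 : ℝ) ^ n) ((2 / 9) * (1 / 32 : ℝ) ^ n)
                have h2 : (0:ℝ) ≤ ρ ^ n := by positivity
                rw [hmdef]; nlinarith
            _ = (ρ / 192) ^ n := by rw [show (ρ / 192 : ℝ) = 1 / 192 * ρ by ring, mul_pow]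
            _ ≤ (min (R k) t / 6) ^ n := pow_le_pow_left₀ (by positivity) hv6 n
      _ = volume (Metric.closedBall q (min (R k) t / 6)) := (stmt14_vol_cb q hv0).symm
      _ ≤ volume (Ω ∩ Metric.closedBall y ρ) := by
          refine measure_mono fun z hz => ⟨hannulus k (hq1 hz), ?_⟩
          refine closedBall_subset_closedBall ?_ (hq2 hz)
          rw [htdef]; linarith
  · -- Case B : all nearby balls are small; measure counting
    push_neg at hcase
    set S : Set ℕ := {k | (Metric.closedBall (x k) (r k) ∩ Metric.closedBall y₁ s).Nonempty}
      with hSdef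
    have hRS : ∀ k ∈ S, R k < s := by
      intro k hk
      by_contra h
      push_neg at h
      have h2 : (Metric.closedBall (x k) (R k) ∩ Metric.closedBall y₁ s).Nonempty :=
        hk.mono (Set.inter_subset_inter (closedBall_subset_closedBall (hrR k).le) Subset.rfl)
      rw [hcase k h] at h2
      exact Set.not_nonempty_empty h2
    have hbigsub : ∀ k ∈ S, Metric.closedBall (x k) (R k) ⊆
        Metric.closedBall y₁ (7 * s / 3) := by
      intro k hk z hz
      obtain ⟨w, hw1, hw2⟩ := hk
      rw [mem_closedBall]
      have hRk := hRS k ⟨w, hw1, hw2⟩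
      have h3k := h3 k
      calc dist z y₁ ≤ dist z (x k) + dist (x k) w + dist w y₁ := dist_triangle4 _ _ _ _
        _ ≤ R k + r k + s := by
            refine add_le_add (add_le_add (mem_closedBall.1 hz) ?_) (mem_closedBall.1 hw2)
            rw [dist_comm]; exact mem_closedBall.1 hw1
        _ ≤ 7 * s / 3 := by linarith
    have hcover : F ∩ Metric.closedBall y₁ s ⊆
        (⋃ k ∈ S, Metric.closedBall (x k) (r k)) ∪ Γ := by
      rintro z ⟨hzF, hzcb⟩
      rcases hFsub' hzF with hz | hz
      · obtain ⟨k, hk⟩ := mem_iUnion.1 hz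
        exact Or.inl (mem_iUnion₂.2 ⟨k, ⟨z, hk, hzcb⟩, hk⟩)
      · exact Or.inr hz
    have hdisjS : S.PairwiseDisjoint (fun k => Metric.closedBall (x k) (R k)) := by
      intro a _ b _ hab
      exact Set.disjoint_iff_inter_eq_empty.2 (hdisj a b hab)
    have hFvol : volume (F ∩ Metric.closedBall y₁ s) ≤
        ENNReal.ofReal ((7 * s / 9) ^ n) * ω := by
      calc volume (F ∩ Metric.closedBall y₁ s)
          ≤ volume ((⋃ k ∈ S, Metric.closedBall (x k) (r k)) ∪ Γ) := measure_mono hcover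
        _ ≤ volume (⋃ k ∈ S, Metric.closedBall (x k) (r k)) + volume Γ :=
            measure_union_le _ _
        _ = volume (⋃ k ∈ S, Metric.closedBall (x k) (r k)) := by rw [hvolΓ, add_zero]
        _ ≤ ∑' k : S, volume (Metric.closedBall (x k) (r k)) :=
            measure_biUnion_le volume S.to_countable _
        _ ≤ ∑' k : S, ENNReal.ofReal ((1 / 3 : ℝ) ^ n) *
              volume (Metric.closedBall (x (k : ℕ)) (R k)) := by
            refine ENNReal.tsum_le_tsum fun k => ?_
            rw [stmt14_vol_cb _ (hr (k : ℕ)).le, stmt14_vol_cb _ (hR (k : ℕ)).le,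
              ← mul_assoc, ← ENNReal.ofReal_mul (by positivity)]
            refine mul_le_mul_left (ENNReal.ofReal_le_ofReal ?_) ω
            calc r (k : ℕ) ^ n ≤ (R (k : ℕ) / 3) ^ n :=
                  pow_le_pow_left₀ (hr _).le (h3 _) n
              _ = (1 / 3) ^ n * R (k : ℕ) ^ n := by
                  rw [show (R (k : ℕ) / 3 : ℝ) = 1 / 3 * R (k : ℕ) by ring, mul_pow]
        _ = ENNReal.ofReal ((1 / 3 : ℝ) ^ n) *
              ∑' k : S, volume (Metric.closedBall (x (k : ℕ)) (R k)) :=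
            ENNReal.tsum_mul_left
        _ = ENNReal.ofReal ((1 / 3 : ℝ) ^ n) *
              volume (⋃ k ∈ S, Metric.closedBall (x k) (R k)) := by
            rw [measure_biUnion S.to_countable hdisjS fun k _ => measurableSet_closedBall]
        _ ≤ ENNReal.ofReal ((1 / 3 : ℝ) ^ n) *
              volume (Metric.closedBall y₁ (7 * s / 3)) := by
            exact mul_le_mul_right (measure_mono (iUnion₂_subset hbigsub)) _
        _ = ENNReal.ofReal ((7 * s / 9) ^ n) * ω := by
            rw [stmt14_vol_cb _ (by linarith : (0:ℝ) ≤ 7 * s / 3), ← mul_assoc,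
              ← ENNReal.ofReal_mul (by positivity)]
            congr 2
            rw [← mul_pow]
            congr 1
            ring
    have hsplit : ENNReal.ofReal (s ^ n) * ω ≤
        volume (Metric.closedBall y₁ s \ F) + ENNReal.ofReal ((7 * s / 9) ^ n) * ω := by
      have h1 : Metric.closedBall y₁ s ⊆
          (Metric.closedBall y₁ s \ F) ∪ (F ∩ Metric.closedBall y₁ s) := by
        intro z hz
        by_cases hzF : z ∈ F
        · exact Or.inr ⟨hzF, hz⟩
        · exact Or.inl ⟨hz, hzF⟩
      calc ENNReal.ofReal (s ^ n) * ω = volume (Metric.closedBall y₁ s) :=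
            (stmt14_vol_cb _ hs0.le).symm
        _ ≤ volume (Metric.closedBall y₁ s \ F) + volume (F ∩ Metric.closedBall y₁ s) :=
            (measure_mono h1).trans (measure_union_le _ _)
        _ ≤ _ := add_le_add_right hFvol _
    have hkey : ENNReal.ofReal (m * ρ ^ n) * ω ≤ volume (Metric.closedBall y₁ s \ F) := by
      rw [← ENNReal.add_le_add_iff_right
        (show ENNReal.ofReal ((7 * s / 9) ^ n) * ω ≠ ∞ from
          ENNReal.mul_ne_top ENNReal.ofReal_ne_top hωfin)]
      refine le_trans ?_ hsplit
      rw [← add_mul, ← ENNReal.ofReal_add (by positivity) (by positivity)]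
      refine mul_le_mul_left (ENNReal.ofReal_le_ofReal ?_) ω
      have e1 : (s : ℝ) ^ n = (1 / 32) ^ n * ρ ^ n := by
        rw [hsdef, show (ρ / 32 : ℝ) = 1 / 32 * ρ by ring, mul_pow]
      have e2 : ((7 * s / 9) : ℝ) ^ n = (7 / 9) ^ n * s ^ n := by
        rw [show (7 * s / 9 : ℝ) = 7 / 9 * s by ring, mul_pow]
      have e3 : ((7 : ℝ) / 9) ^ n ≤ 7 / 9 := by
        calc ((7 : ℝ) / 9) ^ n ≤ (7 / 9 : ℝ) ^ 1 :=
              pow_le_pow_of_le_one (by norm_num) (by norm_num) hn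
          _ = 7 / 9 := pow_one _
      have e4 : m ≤ 2 / 9 * (1 / 32) ^ n := min_le_right _ _
      have e5 : (0:ℝ) ≤ ρ ^ n := by positivity
      have e6 : (0:ℝ) < s ^ n := by positivity
      have g1 : m * ρ ^ n ≤ 2 / 9 * (1 / 32) ^ n * ρ ^ n := mul_le_mul_of_nonneg_right e4 e5
      have g2 : (7 / 9 : ℝ) ^ n * s ^ n ≤ 7 / 9 * s ^ n := mul_le_mul_of_nonneg_right e3 e6.le
      calc m * ρ ^ n + (7 * s / 9) ^ n ≤ 2 / 9 * (1 / 32) ^ n * ρ ^ n + 7 / 9 * s ^ n := by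
            rw [e2]; linarith
        _ = s ^ n := by rw [e1]; ring
    refine hkey.trans (measure_mono ?_)
    intro z hz
    exact ⟨by rw [hΩ]; exact ⟨hcbball hz.1, hz.2⟩, hcbcb hz.1⟩
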